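/- arXiv:2308.09911 — 2 statements merged into one kernel-verified Lean document; each statement's English description precedes it below -/
import Mathlib

section
/- Let K ≥ 1, let τ > 0, let m ∈ ℝ, let S : Fin K → Fin K → ℝ be a similarity matrix, and let l : Fin K → Fin K → ℝ take values in {0,1} (correspondence labels), with q i j = 1 - l i j. Assume that for a fixed index i the positive sets {j : l i j = 1} and {j : l j i = 1} are nonempty and the negative sets {j : l i j = 0} and {j : l j i = 0} are nonempty. Define the weighted positive similarities S⁺_{i2t} = ∑_j α_{ij} · S i j with α_{ij} = (l i j · exp(S i j / τ)) / (∑_k l i k · exp(S i k / τ)), and S⁺_{t2i} = ∑_j α'_{ji} · S j i with α'_{ji} = (l j i · exp(S j i / τ)) / (∑_k l k i · exp(S k i / τ)). Define the Triplet Alignment Loss L_tal(i) = max(m - S⁺_{i2t} + τ·log(∑_j q i j · exp(S i j / τ)), 0) + max(m - S⁺_{t2i} + τ·log(∑_j q j i · exp(S j i / τ)), 0), and the Triplet Ranking Loss with hardest negatives L_trl(i) = max(m - S⁺_{i2t} + max_{j : l i j = 0} S i j, 0) + max(m - S⁺_{t2i} + max_{j : l j i = 0} S j i, 0). Then L_trl(i)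 ≤ L_tal(i). -/
lemma tal_aux {K : ℕ} (τ : ℝ) (hτ : 0 < τ) (f g : Fin K → ℝ)
    (hg : ∀ a, g a = 0 ∨ g a = 1)
    (hne : (Finset.univ.filter (fun j => g j = 0)).Nonempty) :
    (Finset.univ.filter (fun j => g j = 0)).sup' hne f
      ≤ τ * Real.log (∑ j, (1 - g j) * Real.exp (f j / τ)) := by
  obtain ⟨j, hj, hjs⟩ := Finset.exists_mem_eq_sup' hne f
  have hj0 : g j = 0 := (Finset.mem_filter.mp hj).2
  have hterm : ∀ k, 0 ≤ (1 - g k) * Real.exp (f k / τ) := by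
    intro k
    rcases hg k with h | h <;> simp [h, Real.exp_pos, (Real.exp_pos _).le]
  have hle : Real.exp (f j / τ) ≤ ∑ k, (1 - g k) * Real.exp (f k / τ) := by
    have := Finset.single_le_sum (f := fun k => (1 - g k) * Real.exp (f k / τ))
      (fun k _ => hterm k) (Finset.mem_univ j)
    simpa [hj0] using this
  have hpos : 0 < ∑ k, (1 - g k) * Real.exp (f k / τ) :=
    lt_of_lt_of_le (Real.exp_pos _) hle
  have hlog : f j / τ ≤ Real.log (∑ k, (1 - g k) * Real.exp (f k / τ)) :=
    (Real.le_log_iff_exp_le hpos).mpr hle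
  rw [hjs]
  calc f j = τ * (f j / τ) := by field_simp
    _ ≤ τ * Real.log (∑ k, (1 - g k) * Real.exp (f k / τ)) := by
        exact mul_le_mul_of_nonneg_left hlog hτ.le


/-- Lemma 1 of the paper: the Triplet Alignment Loss (TAL) is an upper bound of
the Triplet Ranking Loss (TRL) with the hardest negative samples.  Here
`S : Fin K → Fin K → ℝ` is the similarity matrix, `l` the binary correspondence
labels (`q i j = 1 - l i j`), the weighted positive similarities are the
softmax-weighted averages over the positive pairs, and the hardest negative is
the maximum similarity over the negative set. -/
theorem tal_upper_bounds_trl (K : ℕ) (hK : 1 ≤ K) (τ : ℝ) (hτ : 0 < τ) (m : ℝ)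
    (S l : Fin K → Fin K → ℝ) (i : Fin K)
    (hl : ∀ a b, l a b = 0 ∨ l a b = 1)
    (hpos1 : (Finset.univ.filter (fun j => l i j = 1)).Nonempty)
    (hpos2 : (Finset.univ.filter (fun j => l j i = 1)).Nonempty)
    (hneg1 : (Finset.univ.filter (fun j => l i j = 0)).Nonempty)
    (hneg2 : (Finset.univ.filter (fun j => l j i = 0)).Nonempty) :
    max (m - (∑ j, (l i j * Real.exp (S i j / τ) /
            ∑ k, l i k * Real.exp (S i k / τ)) * S i j)
        + (Finset.univ.filter (fun j => l i j = 0)).sup' hneg1 (fun j => S i j)) 0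
      + max (m - (∑ j, (l j i * Real.exp (S j i / τ) /
            ∑ k, l k i * Real.exp (S k i / τ)) * S j i)
        + (Finset.univ.filter (fun j => l j i = 0)).sup' hneg2 (fun j => S j i)) 0
    ≤ max (m - (∑ j, (l i j * Real.exp (S i j / τ) /
            ∑ k, l i k * Real.exp (S i k / τ)) * S i j)
        + τ * Real.log (∑ j, (1 - l i j) * Real.exp (S i j / τ))) 0
      + max (m - (∑ j, (l j i * Real.exp (S j i / τ) /
            ∑ k, l k i * Real.exp (S k i / τ)) * S j i)
        + τ * Real.log (∑ j, (1 - l j i) * Real.exp (S j i / τ))) 0 := by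
  have h1 := tal_aux τ hτ (fun j => S i j) (fun j => l i j) (fun a => hl i a) hneg1
  have h2 := tal_aux τ hτ (fun j => S j i) (fun j => l j i) (fun a => hl a i) hneg2
  exact add_le_add (max_le_max (by linarith) le_rfl) (max_le_max (by linarith) le_rfl)
end

section
/- Let K ≥ 1, let τ > 0, let m ∈ ℝ, let s : Fin K → ℝ, let a ∈ ℝ, and let q : Fin K → ℝ take values in {0,1} with support T = {j : q j = 1} nonempty. Then max(m - a + max_{j ∈ T} s j, 0) ≤ ∑_{j ∈ T} max(m - a + s j, 0) ≤ max(m - a + τ · log(∑_{j=1}^{K} q j · exp(s j / τ)), 0) + (|T| - 1) · max(m - a + max_{j ∈ T} s j, 0). -/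
/-- Chain of the three single-anchor loss terms: the hardest-negative TRL term
is at most the summation version TRL-S, which in turn is at most the TAL term
plus `(|T| - 1)` copies of the TRL term. -/
theorem trl_le_trls_le_tal_chain (K : ℕ) (hK : 1 ≤ K) (τ : ℝ) (hτ : 0 < τ)
    (m a : ℝ) (s q : Fin K → ℝ) (hq : ∀ j, q j = 0 ∨ q j = 1)
    (hT : (Finset.univ.filter (fun j => q j = 1)).Nonempty) :
    max (m - a + (Finset.univ.filter (fun j => q j = 1)).sup' hT s) 0 ≤
      (∑ j ∈ Finset.univ.filter (fun j => q j = 1), max (m - a + s j) 0) ∧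
    (∑ j ∈ Finset.univ.filter (fun j => q j = 1), max (m - a + s j) 0) ≤
      max (m - a + τ * Real.log (∑ j, q j * Real.exp (s j / τ))) 0 +
        ((Finset.univ.filter (fun j => q j = 1)).card - 1 : ℝ) *
          max (m - a + (Finset.univ.filter (fun j => q j = 1)).sup' hT s) 0 := by
  set T := Finset.univ.filter (fun j => q j = 1) with hTdef
  obtain ⟨j0, hj0, hj0max⟩ := T.exists_mem_eq_sup' hT s
  set M := max (m - a + T.sup' hT s) 0 with hM
  have hMnn : 0 ≤ M := le_max_right _ _
  -- each summand ≤ M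
  have hterm : ∀ j ∈ T, max (m - a + s j) 0 ≤ M := by
    intro j hj
    exact max_le_max (by linarith [Finset.le_sup' s hj]) le_rfl
  constructor
  · calc max (m - a + T.sup' hT s) 0 = max (m - a + s j0) 0 := by rw [hj0max]
      _ ≤ ∑ j ∈ T, max (m - a + s j) 0 :=
        Finset.single_le_sum (f := fun j => max (m - a + s j) 0) (fun j _ => le_max_right _ _) hj0
  · -- TAL term dominates M
    have hsum_pos : Real.exp (s j0 / τ) ≤ ∑ j, q j * Real.exp (s j / τ) := by
      have hq0 : q j0 = 1 := (Finset.mem_filter.mp hj0).2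
      calc Real.exp (s j0 / τ) = q j0 * Real.exp (s j0 / τ) := by rw [hq0]; ring
        _ ≤ ∑ j, q j * Real.exp (s j / τ) := by
          apply Finset.single_le_sum (f := fun j => q j * Real.exp (s j / τ))
            (fun j _ => ?_) (Finset.mem_univ j0)
          rcases hq j with h | h <;> simp [h, (Real.exp_pos _).le]
    have hlog : T.sup' hT s ≤ τ * Real.log (∑ j, q j * Real.exp (s j / τ)) := by
      rw [hj0max]
      have := Real.log_le_log (Real.exp_pos _) hsum_pos
      rw [Real.log_exp] at this
      calc s j0 = τ * (s j0 / τ) := by field_simp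
        _ ≤ τ * Real.log (∑ j, q j * Real.exp (s j / τ)) := by
          exact mul_le_mul_of_nonneg_left this hτ.le
    have hMle : M ≤ max (m - a + τ * Real.log (∑ j, q j * Real.exp (s j / τ))) 0 :=
      max_le_max (by linarith) le_rfl
    have hcard : 1 ≤ (T.card : ℝ) := by
      exact_mod_cast Finset.card_pos.mpr hT
    calc ∑ j ∈ T, max (m - a + s j) 0 ≤ ∑ _j ∈ T, M := Finset.sum_le_sum hterm
      _ = (T.card : ℝ) * M := by rw [Finset.sum_const, nsmul_eq_mul]
      _ = M + ((T.card : ℝ) - 1) * M := by ring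
      _ ≤ max (m - a + τ * Real.log (∑ j, q j * Real.exp (s j / τ))) 0 +
          ((T.card : ℝ) - 1) * M := by
        have : 0 ≤ ((T.card : ℝ) - 1) * M := mul_nonneg (by linarith) hMnn
        nlinarith
end
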